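/- Let $V$ be a linear subspace of $S=S_1\oplus S_2\oplus S_3$ with $\dim V=6$. Then for almost every $\xi\in\mathbb{R}^2$, $\dim(\pi_{1,2}P_\xi(V))\ge 4$. -/

import Mathlib

set_option maxHeartbeats 2000000


open Matrix

/-- The linear map `π_{1,2} ∘ P_ξ` at `ξ = (a,b)`, acting on polynomials of degree ≤ 3
with zero constant term, written in the monomial basis `r, s, r², rs, s², r³, r²s, rs², s³`
of the domain and `r, s, r², rs, s²` of the codomain. -/
noncomputable def Lmat (a b : ℝ) : Matrix (Fin 5) (Fin 9) ℝ :=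
  !![1,0,0,0,0,-3*a^2,-2*a*b,-b^2,0;
     0,1,0,0,0,0,-a^2,-2*a*b,-3*b^2;
     0,0,1,0,0,3*a,b,0,0;
     0,0,0,1,0,0,2*a,2*b,0;
     0,0,0,0,1,0,0,a,3*b]

noncomputable def Lmap (a b : ℝ) : (Fin 9 → ℝ) →ₗ[ℝ] (Fin 5 → ℝ) :=
  (Lmat a b).mulVecLin

/-- `S₃` = span of `r³, r²s, rs², s³`. -/
noncomputable def S₃ : Submodule ℝ (Fin 9 → ℝ) :=
  Submodule.span ℝ {Pi.single (5 : Fin 9) 1, Pi.single 6 1, Pi.single 7 1, Pi.single 8 1}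

private lemma sum_univ_nine {β : Type*} [AddCommMonoid β] (f : Fin 9 → β) :
    ∑ i, f i = f 0 + f 1 + f 2 + f 3 + f 4 + f 5 + f 6 + f 7 + f 8 := by
  rw [Fin.sum_univ_castSucc, Fin.sum_univ_eight]; rfl

private lemma cv_2_0 {α : Type*} (x : α) (v : Fin 1 → α) : Matrix.vecCons x v (0 : Fin 2) = x := rfl
private lemma cv_2_1 {α : Type*} (x : α) (v : Fin 1 → α) : Matrix.vecCons x v (1 : Fin 2) = v 0 := rfl
private lemma cv_3_0 {α : Type*} (x : α) (v : Fin 2 → α) : Matrix.vecCons x v (0 : Fin 3) = x := rfl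
private lemma cv_3_1 {α : Type*} (x : α) (v : Fin 2 → α) : Matrix.vecCons x v (1 : Fin 3) = v 0 := rfl
private lemma cv_3_2 {α : Type*} (x : α) (v : Fin 2 → α) : Matrix.vecCons x v (2 : Fin 3) = v 1 := rfl
private lemma cv_4_0 {α : Type*} (x : α) (v : Fin 3 → α) : Matrix.vecCons x v (0 : Fin 4) = x := rfl
private lemma cv_4_1 {α : Type*} (x : α) (v : Fin 3 → α) : Matrix.vecCons x v (1 : Fin 4) = v 0 := rfl
private lemma cv_4_2 {α : Type*} (x : α) (v : Fin 3 → α) : Matrix.vecCons x v (2 : Fin 4) = v 1 := rfl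
private lemma cv_4_3 {α : Type*} (x : α) (v : Fin 3 → α) : Matrix.vecCons x v (3 : Fin 4) = v 2 := rfl
private lemma cv_5_0 {α : Type*} (x : α) (v : Fin 4 → α) : Matrix.vecCons x v (0 : Fin 5) = x := rfl
private lemma cv_5_1 {α : Type*} (x : α) (v : Fin 4 → α) : Matrix.vecCons x v (1 : Fin 5) = v 0 := rfl
private lemma cv_5_2 {α : Type*} (x : α) (v : Fin 4 → α) : Matrix.vecCons x v (2 : Fin 5) = v 1 := rfl
private lemma cv_5_3 {α : Type*} (x : α) (v : Fin 4 → α) : Matrix.vecCons x v (3 : Fin 5) = v 2 := rfl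
private lemma cv_5_4 {α : Type*} (x : α) (v : Fin 4 → α) : Matrix.vecCons x v (4 : Fin 5) = v 3 := rfl
private lemma cv_6_0 {α : Type*} (x : α) (v : Fin 5 → α) : Matrix.vecCons x v (0 : Fin 6) = x := rfl
private lemma cv_6_1 {α : Type*} (x : α) (v : Fin 5 → α) : Matrix.vecCons x v (1 : Fin 6) = v 0 := rfl
private lemma cv_6_2 {α : Type*} (x : α) (v : Fin 5 → α) : Matrix.vecCons x v (2 : Fin 6) = v 1 := rfl
private lemma cv_6_3 {α : Type*} (x : α) (v : Fin 5 → α) : Matrix.vecCons x v (3 : Fin 6) = v 2 := rfl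
private lemma cv_6_4 {α : Type*} (x : α) (v : Fin 5 → α) : Matrix.vecCons x v (4 : Fin 6) = v 3 := rfl
private lemma cv_6_5 {α : Type*} (x : α) (v : Fin 5 → α) : Matrix.vecCons x v (5 : Fin 6) = v 4 := rfl
private lemma cv_7_0 {α : Type*} (x : α) (v : Fin 6 → α) : Matrix.vecCons x v (0 : Fin 7) = x := rfl
private lemma cv_7_1 {α : Type*} (x : α) (v : Fin 6 → α) : Matrix.vecCons x v (1 : Fin 7) = v 0 := rfl
private lemma cv_7_2 {α : Type*} (x : α) (v : Fin 6 → α) : Matrix.vecCons x v (2 : Fin 7) = v 1 := rfl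
private lemma cv_7_3 {α : Type*} (x : α) (v : Fin 6 → α) : Matrix.vecCons x v (3 : Fin 7) = v 2 := rfl
private lemma cv_7_4 {α : Type*} (x : α) (v : Fin 6 → α) : Matrix.vecCons x v (4 : Fin 7) = v 3 := rfl
private lemma cv_7_5 {α : Type*} (x : α) (v : Fin 6 → α) : Matrix.vecCons x v (5 : Fin 7) = v 4 := rfl
private lemma cv_7_6 {α : Type*} (x : α) (v : Fin 6 → α) : Matrix.vecCons x v (6 : Fin 7) = v 5 := rfl
private lemma cv_8_0 {α : Type*} (x : α) (v : Fin 7 → α) : Matrix.vecCons x v (0 : Fin 8) = x := rfl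
private lemma cv_8_1 {α : Type*} (x : α) (v : Fin 7 → α) : Matrix.vecCons x v (1 : Fin 8) = v 0 := rfl
private lemma cv_8_2 {α : Type*} (x : α) (v : Fin 7 → α) : Matrix.vecCons x v (2 : Fin 8) = v 1 := rfl
private lemma cv_8_3 {α : Type*} (x : α) (v : Fin 7 → α) : Matrix.vecCons x v (3 : Fin 8) = v 2 := rfl
private lemma cv_8_4 {α : Type*} (x : α) (v : Fin 7 → α) : Matrix.vecCons x v (4 : Fin 8) = v 3 := rfl
private lemma cv_8_5 {α : Type*} (x : α) (v : Fin 7 → α) : Matrix.vecCons x v (5 : Fin 8) = v 4 := rfl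
private lemma cv_8_6 {α : Type*} (x : α) (v : Fin 7 → α) : Matrix.vecCons x v (6 : Fin 8) = v 5 := rfl
private lemma cv_8_7 {α : Type*} (x : α) (v : Fin 7 → α) : Matrix.vecCons x v (7 : Fin 8) = v 6 := rfl
private lemma cv_9_0 {α : Type*} (x : α) (v : Fin 8 → α) : Matrix.vecCons x v (0 : Fin 9) = x := rfl
private lemma cv_9_1 {α : Type*} (x : α) (v : Fin 8 → α) : Matrix.vecCons x v (1 : Fin 9) = v 0 := rfl
private lemma cv_9_2 {α : Type*} (x : α) (v : Fin 8 → α) : Matrix.vecCons x v (2 : Fin 9) = v 1 := rfl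
private lemma cv_9_3 {α : Type*} (x : α) (v : Fin 8 → α) : Matrix.vecCons x v (3 : Fin 9) = v 2 := rfl
private lemma cv_9_4 {α : Type*} (x : α) (v : Fin 8 → α) : Matrix.vecCons x v (4 : Fin 9) = v 3 := rfl
private lemma cv_9_5 {α : Type*} (x : α) (v : Fin 8 → α) : Matrix.vecCons x v (5 : Fin 9) = v 4 := rfl
private lemma cv_9_6 {α : Type*} (x : α) (v : Fin 8 → α) : Matrix.vecCons x v (6 : Fin 9) = v 5 := rfl
private lemma cv_9_7 {α : Type*} (x : α) (v : Fin 8 → α) : Matrix.vecCons x v (7 : Fin 9) = v 6 := rfl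
private lemma cv_9_8 {α : Type*} (x : α) (v : Fin 8 → α) : Matrix.vecCons x v (8 : Fin 9) = v 7 := rfl
private lemma fmk_2_0 (h : 0 < 2) : (⟨0, h⟩ : Fin 2) = 0 := rfl
private lemma fmk_2_1 (h : 1 < 2) : (⟨1, h⟩ : Fin 2) = 1 := rfl
private lemma fmk_3_0 (h : 0 < 3) : (⟨0, h⟩ : Fin 3) = 0 := rfl
private lemma fmk_3_1 (h : 1 < 3) : (⟨1, h⟩ : Fin 3) = 1 := rfl
private lemma fmk_3_2 (h : 2 < 3) : (⟨2, h⟩ : Fin 3) = 2 := rfl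
private lemma fmk_4_0 (h : 0 < 4) : (⟨0, h⟩ : Fin 4) = 0 := rfl
private lemma fmk_4_1 (h : 1 < 4) : (⟨1, h⟩ : Fin 4) = 1 := rfl
private lemma fmk_4_2 (h : 2 < 4) : (⟨2, h⟩ : Fin 4) = 2 := rfl
private lemma fmk_4_3 (h : 3 < 4) : (⟨3, h⟩ : Fin 4) = 3 := rfl
private lemma fmk_5_0 (h : 0 < 5) : (⟨0, h⟩ : Fin 5) = 0 := rfl
private lemma fmk_5_1 (h : 1 < 5) : (⟨1, h⟩ : Fin 5) = 1 := rfl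
private lemma fmk_5_2 (h : 2 < 5) : (⟨2, h⟩ : Fin 5) = 2 := rfl
private lemma fmk_5_3 (h : 3 < 5) : (⟨3, h⟩ : Fin 5) = 3 := rfl
private lemma fmk_5_4 (h : 4 < 5) : (⟨4, h⟩ : Fin 5) = 4 := rfl
private lemma fmk_8_0 (h : 0 < 8) : (⟨0, h⟩ : Fin 8) = 0 := rfl
private lemma fmk_8_1 (h : 1 < 8) : (⟨1, h⟩ : Fin 8) = 1 := rfl
private lemma fmk_8_2 (h : 2 < 8) : (⟨2, h⟩ : Fin 8) = 2 := rfl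
private lemma fmk_8_3 (h : 3 < 8) : (⟨3, h⟩ : Fin 8) = 3 := rfl
private lemma fmk_8_4 (h : 4 < 8) : (⟨4, h⟩ : Fin 8) = 4 := rfl
private lemma fmk_8_5 (h : 5 < 8) : (⟨5, h⟩ : Fin 8) = 5 := rfl
private lemma fmk_8_6 (h : 6 < 8) : (⟨6, h⟩ : Fin 8) = 6 := rfl
private lemma fmk_8_7 (h : 7 < 8) : (⟨7, h⟩ : Fin 8) = 7 := rfl
private lemma fmk_9_0 (h : 0 < 9) : (⟨0, h⟩ : Fin 9) = 0 := rfl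
private lemma fmk_9_1 (h : 1 < 9) : (⟨1, h⟩ : Fin 9) = 1 := rfl
private lemma fmk_9_2 (h : 2 < 9) : (⟨2, h⟩ : Fin 9) = 2 := rfl
private lemma fmk_9_3 (h : 3 < 9) : (⟨3, h⟩ : Fin 9) = 3 := rfl
private lemma fmk_9_4 (h : 4 < 9) : (⟨4, h⟩ : Fin 9) = 4 := rfl
private lemma fmk_9_5 (h : 5 < 9) : (⟨5, h⟩ : Fin 9) = 5 := rfl
private lemma fmk_9_6 (h : 6 < 9) : (⟨6, h⟩ : Fin 9) = 6 := rfl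
private lemma fmk_9_7 (h : 7 < 9) : (⟨7, h⟩ : Fin 9) = 7 := rfl
private lemma fmk_9_8 (h : 8 < 9) : (⟨8, h⟩ : Fin 9) = 8 := rfl


private lemma pair_rel (u v : Fin 9 → ℝ)
    (H01 : ∀ a b : ℝ, (3*a^2*u 0 - 3*a*u 2 + u 5) * (2*a*b*v 0 + a^2*v 1 - b*v 2 - 2*a*v 3 + v 6) = (2*a*b*u 0 + a^2*u 1 - b*u 2 - 2*a*u 3 + u 6) * (3*a^2*v 0 - 3*a*v 2 + v 5))
    (H02 : ∀ a b : ℝ, (3*a^2*u 0 - 3*a*u 2 + u 5) * (b^2*v 0 + 2*a*b*v 1 - 2*b*v 3 - a*v 4 + v 7) = (b^2*u 0 + 2*a*b*u 1 - 2*b*u 3 - a*u 4 + u 7) * (3*a^2*v 0 - 3*a*v 2 + v 5))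
    (H03 : ∀ a b : ℝ, (3*a^2*u 0 - 3*a*u 2 + u 5) * (3*b^2*v 1 - 3*b*v 4 + v 8) = (3*b^2*u 1 - 3*b*u 4 + u 8) * (3*a^2*v 0 - 3*a*v 2 + v 5))
    (H12 : ∀ a b : ℝ, (2*a*b*u 0 + a^2*u 1 - b*u 2 - 2*a*u 3 + u 6) * (b^2*v 0 + 2*a*b*v 1 - 2*b*v 3 - a*v 4 + v 7) = (b^2*u 0 + 2*a*b*u 1 - 2*b*u 3 - a*u 4 + u 7) * (2*a*b*v 0 + a^2*v 1 - b*v 2 - 2*a*v 3 + v 6))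
    (H13 : ∀ a b : ℝ, (2*a*b*u 0 + a^2*u 1 - b*u 2 - 2*a*u 3 + u 6) * (3*b^2*v 1 - 3*b*v 4 + v 8) = (3*b^2*u 1 - 3*b*u 4 + u 8) * (2*a*b*v 0 + a^2*v 1 - b*v 2 - 2*a*v 3 + v 6))
    (H23 : ∀ a b : ℝ, (b^2*u 0 + 2*a*b*u 1 - 2*b*u 3 - a*u 4 + u 7) * (3*b^2*v 1 - 3*b*v 4 + v 8) = (3*b^2*u 1 - 3*b*u 4 + u 8) * (b^2*v 0 + 2*a*b*v 1 - 2*b*v 3 - a*v 4 + v 7))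
    : ∀ m n : Fin 9, u m * v n = u n * v m := by
  have D01 : u 0 * v 1 = u 1 * v 0 := by
    linear_combination (1/72 : ℝ) * H01 (-2) (-2) + (-1/18 : ℝ) * H01 (-1) (-2) + (1/12 : ℝ) * H01 (0) (-2) + (-1/18 : ℝ) * H01 (1) (-2) + (1/72 : ℝ) * H01 (2) (-2)
  have D02 : u 0 * v 2 = u 2 * v 0 := by
    linear_combination (-1/6 : ℝ) * H01 (-2) (-2) + (1/6 : ℝ) * H01 (-2) (-1) + (1/3 : ℝ) * H01 (-1) (-2) + (-1/3 : ℝ) * H01 (-1) (-1) + (-1/6 : ℝ) * H01 (0) (-2) + (1/6 : ℝ) * H01 (0) (-1)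
  have D03 : u 0 * v 3 = u 3 * v 0 := by
    linear_combination (5/72 : ℝ) * H01 (-2) (-2) + (-2/9 : ℝ) * H01 (-1) (-2) + (1/4 : ℝ) * H01 (0) (-2) + (-1/9 : ℝ) * H01 (1) (-2) + (1/72 : ℝ) * H01 (2) (-2) + (-1/12 : ℝ) * H02 (-2) (-2) + (1/12 : ℝ) * H02 (-2) (-1) + (1/6 : ℝ) * H02 (-1) (-2) + (-1/6 : ℝ) * H02 (-1) (-1) + (-1/12 : ℝ) * H02 (0) (-2) + (1/12 : ℝ) * H02 (0) (-1)
  have D04 : u 0 * v 4 = u 4 * v 0 := by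
    linear_combination (-1/18 : ℝ) * H01 (-2) (-2) + (2/9 : ℝ) * H01 (-1) (-2) + (-1/3 : ℝ) * H01 (0) (-2) + (2/9 : ℝ) * H01 (1) (-2) + (-1/18 : ℝ) * H01 (2) (-2) + (1/18 : ℝ) * H02 (-2) (-2) + (-1/6 : ℝ) * H02 (-1) (-2) + (1/6 : ℝ) * H02 (0) (-2) + (-1/18 : ℝ) * H02 (1) (-2)
  have D05 : u 0 * v 5 = u 5 * v 0 := by
    linear_combination (1/4 : ℝ) * H01 (-2) (-2) + (-1/4 : ℝ) * H01 (-2) (-1) + (-1/1 : ℝ) * H01 (-1) (-2) + (1/1 : ℝ) * H01 (-1) (-1) + (3/4 : ℝ) * H01 (0) (-2) + (-3/4 : ℝ) * H01 (0) (-1)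
  have D06 : u 0 * v 6 = u 6 * v 0 := by
    linear_combination (19/72 : ℝ) * H01 (-2) (-2) + (-1/6 : ℝ) * H01 (-2) (-1) + (-4/9 : ℝ) * H01 (-1) (-2) + (1/3 : ℝ) * H01 (-1) (-1) + (1/12 : ℝ) * H01 (0) (-2) + (-1/6 : ℝ) * H01 (0) (-1) + (1/9 : ℝ) * H01 (1) (-2) + (-1/72 : ℝ) * H01 (2) (-2) + (-1/6 : ℝ) * H02 (-2) (-2) + (1/6 : ℝ) * H02 (-2) (-1) + (1/6 : ℝ) * H02 (0) (-2) + (-1/6 : ℝ) * H02 (0) (-1) + (1/18 : ℝ) * H03 (-2) (-2) + (-1/9 : ℝ) * H03 (-2) (-1) + (1/18 : ℝ) * H03 (-2) (0)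
  have D07 : u 0 * v 7 = u 7 * v 0 := by
    linear_combination (-5/24 : ℝ) * H01 (-2) (-2) + (2/3 : ℝ) * H01 (-1) (-2) + (-3/4 : ℝ) * H01 (0) (-2) + (1/3 : ℝ) * H01 (1) (-2) + (-1/24 : ℝ) * H01 (2) (-2) + (1/3 : ℝ) * H02 (-2) (-2) + (-1/6 : ℝ) * H02 (-2) (-1) + (-2/3 : ℝ) * H02 (-1) (-2) + (1/3 : ℝ) * H02 (-1) (-1) + (1/3 : ℝ) * H02 (0) (-2) + (-1/6 : ℝ) * H02 (0) (-1) + (-1/9 : ℝ) * H03 (-2) (-2) + (1/9 : ℝ) * H03 (-2) (-1) + (1/9 : ℝ) * H03 (-1) (-2) + (-1/9 : ℝ) * H03 (-1) (-1)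
  have D08 : u 0 * v 8 = u 8 * v 0 := by
    linear_combination (1/6 : ℝ) * H01 (-2) (-2) + (-2/3 : ℝ) * H01 (-1) (-2) + (1/1 : ℝ) * H01 (0) (-2) + (-2/3 : ℝ) * H01 (1) (-2) + (1/6 : ℝ) * H01 (2) (-2) + (-1/3 : ℝ) * H02 (-2) (-2) + (1/1 : ℝ) * H02 (-1) (-2) + (-1/1 : ℝ) * H02 (0) (-2) + (1/3 : ℝ) * H02 (1) (-2) + (1/6 : ℝ) * H03 (-2) (-2) + (-1/3 : ℝ) * H03 (-1) (-2) + (1/6 : ℝ) * H03 (0) (-2)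
  have D12 : u 1 * v 2 = u 2 * v 1 := by
    linear_combination (1/9 : ℝ) * H01 (-2) (-2) + (-7/18 : ℝ) * H01 (-1) (-2) + (1/2 : ℝ) * H01 (0) (-2) + (-5/18 : ℝ) * H01 (1) (-2) + (1/18 : ℝ) * H01 (2) (-2) + (-1/6 : ℝ) * H02 (-2) (-2) + (1/6 : ℝ) * H02 (-2) (-1) + (1/3 : ℝ) * H02 (-1) (-2) + (-1/3 : ℝ) * H02 (-1) (-1) + (-1/6 : ℝ) * H02 (0) (-2) + (1/6 : ℝ) * H02 (0) (-1)
  have D13 : u 1 * v 3 = u 3 * v 1 := by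
    linear_combination (1/144 : ℝ) * H01 (-2) (-2) + (-1/36 : ℝ) * H01 (-1) (-2) + (1/24 : ℝ) * H01 (0) (-2) + (-1/36 : ℝ) * H01 (1) (-2) + (1/144 : ℝ) * H01 (2) (-2) + (1/18 : ℝ) * H02 (-2) (-2) + (-1/6 : ℝ) * H02 (-1) (-2) + (1/6 : ℝ) * H02 (0) (-2) + (-1/18 : ℝ) * H02 (1) (-2) + (-1/4 : ℝ) * H12 (-2) (-2) + (1/4 : ℝ) * H12 (-2) (-1) + (1/2 : ℝ) * H12 (-1) (-2) + (-1/2 : ℝ) * H12 (-1) (-1) + (-1/4 : ℝ) * H12 (0) (-2) + (1/4 : ℝ) * H12 (0) (-1)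
  have D14 : u 1 * v 4 = u 4 * v 1 := by
    linear_combination (1/6 : ℝ) * H12 (-2) (-2) + (-1/2 : ℝ) * H12 (-1) (-2) + (1/2 : ℝ) * H12 (0) (-2) + (-1/6 : ℝ) * H12 (1) (-2)
  have D15 : u 1 * v 5 = u 5 * v 1 := by
    linear_combination (-1/2 : ℝ) * H01 (-2) (-2) + (5/3 : ℝ) * H01 (-1) (-2) + (-2/1 : ℝ) * H01 (0) (-2) + (1/1 : ℝ) * H01 (1) (-2) + (-1/6 : ℝ) * H01 (2) (-2) + (1/1 : ℝ) * H02 (-2) (-2) + (-1/1 : ℝ) * H02 (-2) (-1) + (-2/1 : ℝ) * H02 (-1) (-2) + (2/1 : ℝ) * H02 (-1) (-1) + (1/1 : ℝ) * H02 (0) (-2) + (-1/1 : ℝ) * H02 (0) (-1) + (-1/6 : ℝ) * H03 (-2) (-2) + (1/3 : ℝ) * H03 (-2) (-1) + (-1/6 : ℝ) * H03 (-2) (0)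
  have D16 : u 1 * v 6 = u 6 * v 1 := by
    linear_combination (-7/48 : ℝ) * H01 (-2) (-2) + (1/2 : ℝ) * H01 (-1) (-2) + (-5/8 : ℝ) * H01 (0) (-2) + (1/3 : ℝ) * H01 (1) (-2) + (-1/16 : ℝ) * H01 (2) (-2) + (1/4 : ℝ) * H02 (-2) (-2) + (-1/6 : ℝ) * H02 (-2) (-1) + (-5/12 : ℝ) * H02 (-1) (-2) + (1/3 : ℝ) * H02 (-1) (-1) + (1/12 : ℝ) * H02 (0) (-2) + (-1/6 : ℝ) * H02 (0) (-1) + (1/12 : ℝ) * H02 (1) (-2) + (-1/18 : ℝ) * H03 (-2) (-2) + (1/18 : ℝ) * H03 (-2) (-1) + (1/18 : ℝ) * H03 (-1) (-2) + (-1/18 : ℝ) * H03 (-1) (-1) + (1/4 : ℝ) * H12 (-2) (-2) + (-1/4 : ℝ) * H12 (-2) (-1) + (-1/1 : ℝ) * H12 (-1) (-2) + (1/1 : ℝ) * H12 (-1) (-1) + (3/4 : ℝ) * H12 (0) (-2) + (-3/4 : ℝ) * H12 (0) (-1)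
  have D17 : u 1 * v 7 = u 7 * v 1 := by
    linear_combination (1/72 : ℝ) * H01 (-2) (-2) + (-1/18 : ℝ) * H01 (-1) (-2) + (1/12 : ℝ) * H01 (0) (-2) + (-1/18 : ℝ) * H01 (1) (-2) + (1/72 : ℝ) * H01 (2) (-2) + (-2/9 : ℝ) * H02 (-2) (-2) + (2/3 : ℝ) * H02 (-1) (-2) + (-2/3 : ℝ) * H02 (0) (-2) + (2/9 : ℝ) * H02 (1) (-2) + (1/9 : ℝ) * H03 (-2) (-2) + (-2/9 : ℝ) * H03 (-1) (-2) + (1/9 : ℝ) * H03 (0) (-2) + (1/1 : ℝ) * H12 (-2) (-2) + (-1/2 : ℝ) * H12 (-2) (-1) + (-2/1 : ℝ) * H12 (-1) (-2) + (1/1 : ℝ) * H12 (-1) (-1) + (1/1 : ℝ) * H12 (0) (-2) + (-1/2 : ℝ) * H12 (0) (-1) + (-1/3 : ℝ) * H13 (-2) (-2) + (1/3 : ℝ) * H13 (-2) (-1) + (1/3 : ℝ) * H13 (-1) (-2) + (-1/3 : ℝ) * H13 (-1) (-1)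
  have D18 : u 1 * v 8 = u 8 * v 1 := by
    linear_combination (-1/1 : ℝ) * H12 (-2) (-2) + (3/1 : ℝ) * H12 (-1) (-2) + (-3/1 : ℝ) * H12 (0) (-2) + (1/1 : ℝ) * H12 (1) (-2) + (1/2 : ℝ) * H13 (-2) (-2) + (-1/1 : ℝ) * H13 (-1) (-2) + (1/2 : ℝ) * H13 (0) (-2)
  have D23 : u 2 * v 3 = u 3 * v 2 := by
    linear_combination (-7/18 : ℝ) * H01 (-2) (-2) + (1/4 : ℝ) * H01 (-2) (-1) + (17/18 : ℝ) * H01 (-1) (-2) + (-1/2 : ℝ) * H01 (-1) (-1) + (-3/4 : ℝ) * H01 (0) (-2) + (1/4 : ℝ) * H01 (0) (-1) + (2/9 : ℝ) * H01 (1) (-2) + (-1/36 : ℝ) * H01 (2) (-2) + (1/4 : ℝ) * H02 (-2) (-2) + (-1/4 : ℝ) * H02 (-2) (-1) + (-1/3 : ℝ) * H02 (-1) (-2) + (1/3 : ℝ) * H02 (-1) (-1) + (1/12 : ℝ) * H02 (0) (-2) + (-1/12 : ℝ) * H02 (0) (-1) + (-1/18 : ℝ) * H03 (-2) (-2) + (1/9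 : ℝ) * H03 (-2) (-1) + (-1/18 : ℝ) * H03 (-2) (0)
  have D24 : u 2 * v 4 = u 4 * v 2 := by
    linear_combination (3/8 : ℝ) * H01 (-2) (-2) + (-4/3 : ℝ) * H01 (-1) (-2) + (7/4 : ℝ) * H01 (0) (-2) + (-1/1 : ℝ) * H01 (1) (-2) + (5/24 : ℝ) * H01 (2) (-2) + (-2/3 : ℝ) * H02 (-2) (-2) + (1/2 : ℝ) * H02 (-2) (-1) + (3/2 : ℝ) * H02 (-1) (-2) + (-1/1 : ℝ) * H02 (-1) (-1) + (-1/1 : ℝ) * H02 (0) (-2) + (1/2 : ℝ) * H02 (0) (-1) + (1/6 : ℝ) * H02 (1) (-2) + (1/9 : ℝ) * H03 (-2) (-2) + (-1/9 : ℝ) * H03 (-2) (-1) + (-1/9 : ℝ) * H03 (-1) (-2) + (1/9 : ℝ) * H03 (-1) (-1)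
  have D25 : u 2 * v 5 = u 5 * v 2 := by
    linear_combination (-1/1 : ℝ) * H01 (0) (-2) + (1/1 : ℝ) * H01 (0) (-1)
  have D26 : u 2 * v 6 = u 6 * v 2 := by
    linear_combination (1/18 : ℝ) * H01 (-2) (-2) + (-1/12 : ℝ) * H01 (-2) (-1) + (-1/9 : ℝ) * H01 (-1) (-2) + (1/3 : ℝ) * H01 (-1) (-1) + (1/4 : ℝ) * H01 (0) (-2) + (-1/4 : ℝ) * H01 (0) (-1) + (-2/9 : ℝ) * H01 (1) (-2) + (1/36 : ℝ) * H01 (2) (-2) + (-1/3 : ℝ) * H02 (0) (-2) + (1/3 : ℝ) * H02 (0) (-1)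
  have D27 : u 2 * v 7 = u 7 * v 2 := by
    linear_combination (3/4 : ℝ) * H01 (-2) (-2) + (-1/3 : ℝ) * H01 (-2) (-1) + (-2/1 : ℝ) * H01 (-1) (-2) + (2/3 : ℝ) * H01 (-1) (-1) + (11/6 : ℝ) * H01 (0) (-2) + (-1/3 : ℝ) * H01 (0) (-1) + (-2/3 : ℝ) * H01 (1) (-2) + (1/12 : ℝ) * H01 (2) (-2) + (-5/6 : ℝ) * H02 (-2) (-2) + (2/3 : ℝ) * H02 (-2) (-1) + (4/3 : ℝ) * H02 (-1) (-2) + (-2/3 : ℝ) * H02 (-1) (-1) + (-1/2 : ℝ) * H02 (0) (-2) + (5/18 : ℝ) * H03 (-2) (-2) + (-4/9 : ℝ) * H03 (-2) (-1) + (1/6 : ℝ) * H03 (-2) (0) + (-2/9 : ℝ) * H03 (-1) (-2) + (2/9 : ℝ) * H03 (-1) (-1)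
  have D28 : u 2 * v 8 = u 8 * v 2 := by
    linear_combination (-11/12 : ℝ) * H01 (-2) (-2) + (10/3 : ℝ) * H01 (-1) (-2) + (-9/2 : ℝ) * H01 (0) (-2) + (8/3 : ℝ) * H01 (1) (-2) + (-7/12 : ℝ) * H01 (2) (-2) + (2/1 : ℝ) * H02 (-2) (-2) + (-1/1 : ℝ) * H02 (-2) (-1) + (-5/1 : ℝ) * H02 (-1) (-2) + (2/1 : ℝ) * H02 (-1) (-1) + (4/1 : ℝ) * H02 (0) (-2) + (-1/1 : ℝ) * H02 (0) (-1) + (-1/1 : ℝ) * H02 (1) (-2) + (-5/6 : ℝ) * H03 (-2) (-2) + (2/3 : ℝ) * H03 (-2) (-1) + (4/3 : ℝ) * H03 (-1) (-2) + (-2/3 : ℝ) * H03 (-1) (-1) + (-1/2 : ℝ) * H03 (0) (-2)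
  have D34 : u 3 * v 4 = u 4 * v 3 := by
    linear_combination (5/144 : ℝ) * H01 (-2) (-2) + (-5/36 : ℝ) * H01 (-1) (-2) + (5/24 : ℝ) * H01 (0) (-2) + (-5/36 : ℝ) * H01 (1) (-2) + (5/144 : ℝ) * H01 (2) (-2) + (1/9 : ℝ) * H02 (-2) (-2) + (-1/3 : ℝ) * H02 (-1) (-2) + (1/3 : ℝ) * H02 (0) (-2) + (-1/9 : ℝ) * H02 (1) (-2) + (-1/18 : ℝ) * H03 (-2) (-2) + (1/9 : ℝ) * H03 (-1) (-2) + (-1/18 : ℝ) * H03 (0) (-2) + (-1/1 : ℝ) * H12 (-2) (-2) + (3/4 : ℝ) * H12 (-2) (-1) + (9/4 : ℝ) * H12 (-1) (-2) + (-3/2 : ℝ) * H12 (-1) (-1) + (-3/2 : ℝ) * H12 (0) (-2) + (3/4 : ℝ) * H12 (0) (-1) + (1/4 : ℝ) * H12 (1) (-2) + (1/6 : ℝ) * H13 (-2) (-2) + (-1/6 : ℝ) * H13 (-2) (-1) + (-1/6 : ℝ) * H13 (-1) (-2) + (1/6 : ℝ) * H13 (-1) (-1)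
  have D35 : u 3 * v 5 = u 5 * v 3 := by
    linear_combination (-3/8 : ℝ) * H01 (-2) (-2) + (3/8 : ℝ) * H01 (-2) (-1) + (3/2 : ℝ) * H01 (-1) (-2) + (-3/2 : ℝ) * H01 (-1) (-1) + (-9/8 : ℝ) * H01 (0) (-2) + (9/8 : ℝ) * H01 (0) (-1) + (-1/2 : ℝ) * H02 (0) (-2) + (1/2 : ℝ) * H02 (0) (-1)
  have D36 : u 3 * v 6 = u 6 * v 3 := by
    linear_combination (-29/48 : ℝ) * H01 (-2) (-2) + (1/4 : ℝ) * H01 (-2) (-1) + (4/3 : ℝ) * H01 (-1) (-2) + (-1/2 : ℝ) * H01 (-1) (-1) + (-7/8 : ℝ) * H01 (0) (-2) + (1/4 : ℝ) * H01 (0) (-1) + (1/6 : ℝ) * H01 (1) (-2) + (-1/48 : ℝ) * H01 (2) (-2) + (7/12 : ℝ) * H02 (-2) (-2) + (-2/3 : ℝ) * H02 (-2) (-1) + (-1/3 : ℝ) * H02 (-1) (-2) + (2/3 : ℝ) * H02 (-1) (-1) + (-1/4 : ℝ) * H02 (0) (-2) + (-1/9 : ℝ) * H03 (-2) (-2) +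 (5/18 : ℝ) * H03 (-2) (-1) + (-1/6 : ℝ) * H03 (-2) (0) + (-1/9 : ℝ) * H03 (-1) (-2) + (1/9 : ℝ) * H03 (-1) (-1) + (-1/2 : ℝ) * H12 (0) (-2) + (1/2 : ℝ) * H12 (0) (-1)
  have D37 : u 3 * v 7 = u 7 * v 3 := by
    linear_combination (5/32 : ℝ) * H01 (-2) (-2) + (-1/2 : ℝ) * H01 (-1) (-2) + (9/16 : ℝ) * H01 (0) (-2) + (-1/4 : ℝ) * H01 (1) (-2) + (1/32 : ℝ) * H01 (2) (-2) + (-7/24 : ℝ) * H02 (-2) (-2) + (1/12 : ℝ) * H02 (-2) (-1) + (13/24 : ℝ) * H02 (-1) (-2) + (-1/6 : ℝ) * H02 (-1) (-1) + (-5/24 : ℝ) * H02 (0) (-2) + (1/12 : ℝ) * H02 (0) (-1) + (-1/24 : ℝ) * H02 (1) (-2) + (1/9 : ℝ) * H03 (-2) (-2) + (-5/36 : ℝ) * H03 (-2) (-1) + (-1/36 : ℝ) * H03 (-1) (-2) + (5/36 : ℝ) * H03 (-1) (-1) + (-1/12 : ℝ) * H03 (0) (-2) + (-1/8 : ℝ)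 * H12 (-2) (-2) + (-1/8 : ℝ) * H12 (-2) (-1) + (1/2 : ℝ) * H12 (-1) (-2) + (1/2 : ℝ) * H12 (-1) (-1) + (-3/8 : ℝ) * H12 (0) (-2) + (-3/8 : ℝ) * H12 (0) (-1) + (1/6 : ℝ) * H13 (-2) (-2) + (-1/6 : ℝ) * H13 (-2) (-1) + (-1/3 : ℝ) * H13 (-1) (-2) + (1/3 : ℝ) * H13 (-1) (-1)
  have D38 : u 3 * v 8 = u 8 * v 3 := by
    linear_combination (-1/8 : ℝ) * H01 (-2) (-2) + (1/2 : ℝ) * H01 (-1) (-2) + (-3/4 : ℝ) * H01 (0) (-2) + (1/2 : ℝ) * H01 (1) (-2) + (-1/8 : ℝ) * H01 (2) (-2) + (3/1 : ℝ) * H12 (-2) (-2) + (-3/2 : ℝ) * H12 (-2) (-1) + (-15/2 : ℝ) * H12 (-1) (-2) + (3/1 : ℝ) * H12 (-1) (-1) + (6/1 : ℝ) * H12 (0) (-2) + (-3/2 : ℝ) * H12 (0) (-1) + (-3/2 : ℝ) * H12 (1) (-2) + (-5/4 : ℝ) * H13 (-2) (-2) + (1/1 : ℝ) * H13 (-2)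 (-1) + (2/1 : ℝ) * H13 (-1) (-2) + (-1/1 : ℝ) * H13 (-1) (-1) + (-3/4 : ℝ) * H13 (0) (-2)
  have D45 : u 4 * v 5 = u 5 * v 4 := by
    linear_combination (19/12 : ℝ) * H01 (-2) (-2) + (-16/3 : ℝ) * H01 (-1) (-2) + (13/2 : ℝ) * H01 (0) (-2) + (-10/3 : ℝ) * H01 (1) (-2) + (7/12 : ℝ) * H01 (2) (-2) + (-10/3 : ℝ) * H02 (-2) (-2) + (3/1 : ℝ) * H02 (-2) (-1) + (7/1 : ℝ) * H02 (-1) (-2) + (-6/1 : ℝ) * H02 (-1) (-1) + (-4/1 : ℝ) * H02 (0) (-2) + (3/1 : ℝ) * H02 (0) (-1) + (1/3 : ℝ) * H02 (1) (-2) + (5/6 : ℝ) * H03 (-2) (-2) + (-4/3 : ℝ) * H03 (-2) (-1) + (1/2 : ℝ) * H03 (-2) (0) + (-2/3 : ℝ) * H03 (-1) (-2) + (2/3 : ℝ) * H03 (-1) (-1)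
  have D46 : u 4 * v 6 = u 6 * v 4 := by
    linear_combination (23/48 : ℝ) * H01 (-2) (-2) + (-5/3 : ℝ) * H01 (-1) (-2) + (17/8 : ℝ) * H01 (0) (-2) + (-7/6 : ℝ) * H01 (1) (-2) + (11/48 : ℝ) * H01 (2) (-2) + (-11/12 : ℝ) * H02 (-2) (-2) + (1/2 : ℝ) * H02 (-2) (-1) + (7/4 : ℝ) * H02 (-1) (-2) + (-1/1 : ℝ) * H02 (-1) (-1) + (-3/4 : ℝ) * H02 (0) (-2) + (1/2 : ℝ) * H02 (0) (-1) + (-1/12 : ℝ) * H02 (1) (-2) + (2/9 : ℝ) * H03 (-2) (-2) + (-5/18 : ℝ) * H03 (-2) (-1) + (-1/18 : ℝ) * H03 (-1) (-2) + (5/18 : ℝ) * H03 (-1) (-1) + (-1/6 : ℝ) * H03 (0) (-2) + (-13/12 : ℝ) * H12 (-2) (-2) + (3/4 : ℝ) * H12 (-2) (-1) + (4/1 : ℝ) * H12 (-1) (-2) + (-3/1 : ℝ) * H12 (-1) (-1) + (-13/4 : ℝ) * H12 (0) (-2) + (9/4 : ℝ) * H12 (0) (-1) + (1/3 : ℝ)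 * H12 (1) (-2) + (1/3 : ℝ) * H13 (-2) (-2) + (-1/3 : ℝ) * H13 (-2) (-1) + (-2/3 : ℝ) * H13 (-1) (-2) + (2/3 : ℝ) * H13 (-1) (-1)
  have D47 : u 4 * v 7 = u 7 * v 4 := by
    linear_combination (-1/36 : ℝ) * H01 (-2) (-2) + (1/9 : ℝ) * H01 (-1) (-2) + (-1/6 : ℝ) * H01 (0) (-2) + (1/9 : ℝ) * H01 (1) (-2) + (-1/36 : ℝ) * H01 (2) (-2) + (11/18 : ℝ) * H02 (-2) (-2) + (-11/6 : ℝ) * H02 (-1) (-2) + (11/6 : ℝ) * H02 (0) (-2) + (-11/18 : ℝ) * H02 (1) (-2) + (-1/2 : ℝ) * H03 (-2) (-2) + (1/1 : ℝ) * H03 (-1) (-2) + (-1/2 : ℝ) * H03 (0) (-2) + (-23/6 : ℝ) * H12 (-2) (-2) + (3/2 : ℝ) * H12 (-2) (-1) + (17/2 : ℝ) * H12 (-1) (-2) + (-3/1 : ℝ) * H12 (-1) (-1) + (-11/2 : ℝ) * H12 (0) (-2) + (3/2 : ℝ) * H12 (0) (-1) + (5/6 : ℝ) * H12 (1) (-2)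 + (11/6 : ℝ) * H13 (-2) (-2) + (-4/3 : ℝ) * H13 (-2) (-1) + (-2/1 : ℝ) * H13 (-1) (-2) + (4/3 : ℝ) * H13 (-1) (-1) + (1/6 : ℝ) * H13 (0) (-2) + (-1/3 : ℝ) * H23 (-2) (-2) + (1/3 : ℝ) * H23 (-2) (-1)
  have D48 : u 4 * v 8 = u 8 * v 4 := by
    linear_combination (2/1 : ℝ) * H12 (-2) (-2) + (-6/1 : ℝ) * H12 (-1) (-2) + (6/1 : ℝ) * H12 (0) (-2) + (-2/1 : ℝ) * H12 (1) (-2) + (-2/1 : ℝ) * H13 (-2) (-2) + (4/1 : ℝ) * H13 (-1) (-2) + (-2/1 : ℝ) * H13 (0) (-2) + (1/1 : ℝ) * H23 (-2) (-2) + (-1/1 : ℝ) * H23 (-1) (-2)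
  have D56 : u 5 * v 6 = u 6 * v 5 := by
    linear_combination (-1/1 : ℝ) * H01 (0) (-2) + (2/1 : ℝ) * H01 (0) (-1)
  have D57 : u 5 * v 7 = u 7 * v 5 := by
    linear_combination (-1/2 : ℝ) * H01 (-2) (-2) + (1/2 : ℝ) * H01 (-2) (-1) + (2/1 : ℝ) * H01 (-1) (-2) + (-2/1 : ℝ) * H01 (-1) (-1) + (-3/2 : ℝ) * H01 (0) (-2) + (3/2 : ℝ) * H01 (0) (-1) + (-1/1 : ℝ) * H02 (0) (-2) + (2/1 : ℝ) * H02 (0) (-1)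
  have D58 : u 5 * v 8 = u 8 * v 5 := by
    linear_combination (7/2 : ℝ) * H01 (-2) (-2) + (-12/1 : ℝ) * H01 (-1) (-2) + (15/1 : ℝ) * H01 (0) (-2) + (-8/1 : ℝ) * H01 (1) (-2) + (3/2 : ℝ) * H01 (2) (-2) + (-8/1 : ℝ) * H02 (-2) (-2) + (6/1 : ℝ) * H02 (-2) (-1) + (18/1 : ℝ) * H02 (-1) (-2) + (-12/1 : ℝ) * H02 (-1) (-1) + (-12/1 : ℝ) * H02 (0) (-2) + (6/1 : ℝ) * H02 (0) (-1) + (2/1 : ℝ) * H02 (1) (-2) + (3/1 : ℝ) * H03 (-2) (-2) + (-4/1 : ℝ) * H03 (-2) (-1) + (1/1 : ℝ) * H03 (-2) (0) + (-4/1 : ℝ) * H03 (-1) (-2) + (4/1 : ℝ) * H03 (-1) (-1) + (1/1 : ℝ) * H03 (0) (-2)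
  have D67 : u 6 * v 7 = u 7 * v 6 := by
    linear_combination (-13/12 : ℝ) * H01 (-2) (-2) + (1/3 : ℝ) * H01 (-2) (-1) + (8/3 : ℝ) * H01 (-1) (-2) + (-2/3 : ℝ) * H01 (-1) (-1) + (-13/6 : ℝ) * H01 (0) (-2) + (1/3 : ℝ) * H01 (0) (-1) + (2/3 : ℝ) * H01 (1) (-2) + (-1/12 : ℝ) * H01 (2) (-2) + (4/3 : ℝ) * H02 (-2) (-2) + (-4/3 : ℝ) * H02 (-2) (-1) + (-4/3 : ℝ) * H02 (-1) (-2) + (4/3 : ℝ) * H02 (-1) (-1) + (-1/3 : ℝ) * H03 (-2) (-2) + (2/3 : ℝ) * H03 (-2) (-1) + (-1/3 : ℝ) * H03 (-2) (0) + (-1/1 : ℝ) * H12 (0) (-2) + (2/1 : ℝ) * H12 (0) (-1)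
  have D68 : u 6 * v 8 = u 8 * v 6 := by
    linear_combination (9/8 : ℝ) * H01 (-2) (-2) + (-4/1 : ℝ) * H01 (-1) (-2) + (21/4 : ℝ) * H01 (0) (-2) + (-3/1 : ℝ) * H01 (1) (-2) + (5/8 : ℝ) * H01 (2) (-2) + (-5/2 : ℝ) * H02 (-2) (-2) + (1/1 : ℝ) * H02 (-2) (-1) + (11/2 : ℝ) * H02 (-1) (-2) + (-2/1 : ℝ) * H02 (-1) (-1) + (-7/2 : ℝ) * H02 (0) (-2) + (1/1 : ℝ) * H02 (0) (-1) + (1/2 : ℝ) * H02 (1) (-2) + (1/1 : ℝ) * H03 (-2) (-2) + (-1/1 : ℝ) * H03 (-2) (-1) + (-1/1 : ℝ) * H03 (-1) (-2) + (1/1 : ℝ) * H03 (-1) (-1) + (-7/2 : ℝ) * H12 (-2) (-2) + (3/2 : ℝ) * H12 (-2) (-1) + (12/1 : ℝ) * H12 (-1) (-2) + (-6/1 : ℝ) * H12 (-1) (-1) + (-21/2 : ℝ) * H12 (0) (-2) + (9/2 : ℝ) * H12 (0) (-1) + (2/1 : ℝ) * H12 (1) (-2) + (2/1 : ℝ) *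 H13 (-2) (-2) + (-2/1 : ℝ) * H13 (-2) (-1) + (-4/1 : ℝ) * H13 (-1) (-2) + (4/1 : ℝ) * H13 (-1) (-1) + (1/1 : ℝ) * H13 (0) (-2)
  have D78 : u 7 * v 8 = u 8 * v 7 := by
    linear_combination (1/1 : ℝ) * H02 (-2) (-2) + (-3/1 : ℝ) * H02 (-1) (-2) + (3/1 : ℝ) * H02 (0) (-2) + (-1/1 : ℝ) * H02 (1) (-2) + (-1/1 : ℝ) * H03 (-2) (-2) + (2/1 : ℝ) * H03 (-1) (-2) + (-1/1 : ℝ) * H03 (0) (-2) + (-11/1 : ℝ) * H12 (-2) (-2) + (3/1 : ℝ) * H12 (-2) (-1) + (27/1 : ℝ) * H12 (-1) (-2) + (-6/1 : ℝ) * H12 (-1) (-1) + (-21/1 : ℝ) * H12 (0) (-2) + (3/1 : ℝ) * H12 (0) (-1) + (5/1 : ℝ) * H12 (1) (-2) + (8/1 : ℝ) * H13 (-2) (-2) + (-4/1 : ℝ) * H13 (-2) (-1) + (-12/1 : ℝ) * H13 (-1) (-2) + (4/1 : ℝ) * H13 (-1) (-1) + (4/1 : ℝ) * H13 (0) (-2)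 + (-3/1 : ℝ) * H23 (-2) (-2) + (2/1 : ℝ) * H23 (-2) (-1) + (2/1 : ℝ) * H23 (-1) (-2)
  intro m n
  fin_cases m <;> fin_cases n <;>
    first
      | ring1
      | exact D01
      | exact D01.symm
      | exact D02
      | exact D02.symm
      | exact D03
      | exact D03.symm
      | exact D04
      | exact D04.symm
      | exact D05
      | exact D05.symm
      | exact D06
      | exact D06.symm
      | exact D07
      | exact D07.symm
      | exact D08
      | exact D08.symm
      | exact D12
      | exact D12.symm
      | exact D13
      | exact D13.symm
      | exact D14
      | exact D14.symm
      | exact D15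
      | exact D15.symm
      | exact D16
      | exact D16.symm
      | exact D17
      | exact D17.symm
      | exact D18
      | exact D18.symm
      | exact D23
      | exact D23.symm
      | exact D24
      | exact D24.symm
      | exact D25
      | exact D25.symm
      | exact D26
      | exact D26.symm
      | exact D27
      | exact D27.symm
      | exact D28
      | exact D28.symm
      | exact D34
      | exact D34.symm
      | exact D35
      | exact D35.symm
      | exact D36
      | exact D36.symm
      | exact D37
      | exact D37.symm
      | exact D38
      | exact D38.symm
      | exact D45
      | exact D45.symm
      | exact D46
      | exact D46.symm
      | exact D47
      | exact D47.symm
      | exact D48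
      | exact D48.symm
      | exact D56
      | exact D56.symm
      | exact D57
      | exact D57.symm
      | exact D58
      | exact D58.symm
      | exact D67
      | exact D67.symm
      | exact D68
      | exact D68.symm
      | exact D78
      | exact D78.symm

noncomputable def Kmat (a b : ℝ) : Matrix (Fin 9) (Fin 4) ℝ :=
  !![3*a^2, 2*a*b, b^2, 0;
     0, a^2, 2*a*b, 3*b^2;
     -3*a, -b, 0, 0;
     0, -2*a, -2*b, 0;
     0, 0, -a, -3*b;
     1,0,0,0;
     0,1,0,0;
     0,0,1,0;
     0,0,0,1]

open MvPolynomial in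
noncomputable def entP (k : Fin 4) (u : Fin 9 → ℝ) : MvPolynomial (Fin 2) ℝ :=
  ![C (3 * u 0) * X 0 ^ 2 - C (3 * u 2) * X 0 + C (u 5),
    C (2 * u 0) * (X 0 * X 1) + C (u 1) * X 0 ^ 2 - C (u 2) * X 1 - C (2 * u 3) * X 0 + C (u 6),
    C (u 0) * X 1 ^ 2 + C (2 * u 1) * (X 0 * X 1) - C (2 * u 3) * X 1 - C (u 4) * X 0 + C (u 7),
    C (3 * u 1) * X 1 ^ 2 - C (3 * u 4) * X 1 + C (u 8)] k

lemma eval_entP0 (u : Fin 9 → ℝ) (a b : ℝ) :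
    MvPolynomial.eval ![a, b] (entP 0 u) = 3*a^2*u 0 - 3*a*u 2 + u 5 := by
  simp [entP]; ring

lemma eval_entP1 (u : Fin 9 → ℝ) (a b : ℝ) :
    MvPolynomial.eval ![a, b] (entP 1 u) = 2*a*b*u 0 + a^2*u 1 - b*u 2 - 2*a*u 3 + u 6 := by
  simp [entP]; ring

lemma eval_entP2 (u : Fin 9 → ℝ) (a b : ℝ) :
    MvPolynomial.eval ![a, b] (entP 2 u) = b^2*u 0 + 2*a*b*u 1 - 2*b*u 3 - a*u 4 + u 7 := by
  simp [entP]; ring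

lemma eval_entP3 (u : Fin 9 → ℝ) (a b : ℝ) :
    MvPolynomial.eval ![a, b] (entP 3 u) = 3*b^2*u 1 - 3*b*u 4 + u 8 := by
  simp [entP]; ring

lemma N_entry (W : Matrix (Fin 3) (Fin 9) ℝ) (i : Fin 3) (k : Fin 4) (a b : ℝ) :
    (W * Kmat a b) i k = MvPolynomial.eval ![a, b] (entP k (W i)) := by
  fin_cases k <;>
    rw [Matrix.mul_apply] <;>
    simp only [eval_entP0, eval_entP1, eval_entP2, eval_entP3, Kmat, sum_univ_nine, cv_2_0, cv_2_1, cv_3_0, cv_3_1, cv_3_2, cv_4_0, cv_4_1, cv_4_2, cv_4_3, cv_5_0, cv_5_1, cv_5_2, cv_5_3, cv_5_4, cv_6_0, cv_6_1, cv_6_2, cv_6_3, cv_6_4, cv_6_5, cv_7_0, cv_7_1, cv_7_2, cv_7_3, cv_7_4, cv_7_5, cv_7_6, cv_8_0, cv_8_1, cv_8_2, cv_8_3, cv_8_4, cv_8_5, cv_8_6, cv_8_7, cv_9_0, cv_9_1, cv_9_2, cv_9_3, cv_9_4, cv_9_5, cv_9_6, cv_9_7, cv_9_8, fmk_2_0,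 fmk_2_1, fmk_3_0, fmk_3_1, fmk_3_2, fmk_4_0, fmk_4_1, fmk_4_2, fmk_4_3, fmk_5_0, fmk_5_1, fmk_5_2, fmk_5_3, fmk_5_4, fmk_8_0, fmk_8_1, fmk_8_2, fmk_8_3, fmk_8_4, fmk_8_5, fmk_8_6, fmk_8_7, fmk_9_0, fmk_9_1, fmk_9_2, fmk_9_3, fmk_9_4, fmk_9_5, fmk_9_6, fmk_9_7, fmk_9_8, Matrix.of_apply, Matrix.cons_val_zero, Matrix.cons_val_one, Matrix.head_cons, Pi.zero_apply] <;>
    ring1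

lemma LK_zero (a b : ℝ) : Lmat a b * Kmat a b = 0 := by
  ext i j
  fin_cases i <;> fin_cases j <;>
    rw [Matrix.mul_apply] <;>
    simp only [Lmat, Kmat, sum_univ_nine, Matrix.zero_apply, cv_2_0, cv_2_1, cv_3_0, cv_3_1, cv_3_2, cv_4_0, cv_4_1, cv_4_2, cv_4_3, cv_5_0, cv_5_1, cv_5_2, cv_5_3, cv_5_4, cv_6_0, cv_6_1, cv_6_2, cv_6_3, cv_6_4, cv_6_5, cv_7_0, cv_7_1, cv_7_2, cv_7_3, cv_7_4, cv_7_5, cv_7_6, cv_8_0, cv_8_1, cv_8_2, cv_8_3, cv_8_4, cv_8_5, cv_8_6, cv_8_7, cv_9_0, cv_9_1, cv_9_2, cv_9_3, cv_9_4, cv_9_5, cv_9_6, cv_9_7, cv_9_8, fmk_2_0, fmk_2_1, fmk_3_0, fmk_3_1, fmk_3_2, fmk_4_0, fmk_4_1, fmk_4_2, fmk_4_3, fmk_5_0, fmk_5_1, fmk_5_2, fmk_5_3, fmk_5_4, fmk_8_0, fmk_8_1, fmk_8_2, fmk_8_3, fmk_8_4, fmk_8_5, fmk_8_6, fmk_8_7,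 fmk_9_0, fmk_9_1, fmk_9_2, fmk_9_3, fmk_9_4, fmk_9_5, fmk_9_6, fmk_9_7, fmk_9_8, Matrix.of_apply, Matrix.cons_val_zero, Matrix.cons_val_one, Matrix.head_cons, Pi.zero_apply] <;>
    ring1

lemma ker_Lmap (a b : ℝ) :
    LinearMap.ker (Lmap a b) = LinearMap.range (Kmat a b).mulVecLin := by
  apply le_antisymm
  · intro x hx
    have hx' : (Lmat a b).mulVec x = 0 := hx
    refine ⟨![x 5, x 6, x 7, x 8], ?_⟩
    have h0 := congrFun hx' 0
    have h1 := congrFun hx' 1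
    have h2 := congrFun hx' 2
    have h3 := congrFun hx' 3
    have h4 := congrFun hx' 4
    simp only [Lmat, Matrix.mulVec, dotProduct, sum_univ_nine, cv_2_0, cv_2_1, cv_3_0, cv_3_1, cv_3_2, cv_4_0, cv_4_1, cv_4_2, cv_4_3, cv_5_0, cv_5_1, cv_5_2, cv_5_3, cv_5_4, cv_6_0, cv_6_1, cv_6_2, cv_6_3, cv_6_4, cv_6_5, cv_7_0, cv_7_1, cv_7_2, cv_7_3, cv_7_4, cv_7_5, cv_7_6, cv_8_0, cv_8_1, cv_8_2, cv_8_3, cv_8_4, cv_8_5, cv_8_6, cv_8_7, cv_9_0, cv_9_1, cv_9_2, cv_9_3, cv_9_4, cv_9_5, cv_9_6, cv_9_7, cv_9_8, fmk_2_0, fmk_2_1, fmk_3_0, fmk_3_1, fmk_3_2, fmk_4_0, fmk_4_1, fmk_4_2, fmk_4_3, fmk_5_0, fmk_5_1, fmk_5_2, fmk_5_3, fmk_5_4, fmk_8_0, fmk_8_1, fmk_8_2, fmk_8_3, fmk_8_4, fmk_8_5, fmk_8_6, fmk_8_7, fmk_9_0, fmk_9_1, fmk_9_2, fmk_9_3,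 fmk_9_4, fmk_9_5, fmk_9_6, fmk_9_7, fmk_9_8, Matrix.of_apply, Matrix.cons_val_zero, Matrix.cons_val_one, Matrix.head_cons, Pi.zero_apply] at h0 h1 h2 h3 h4
    funext i
    fin_cases i <;>
      simp only [Kmat, Matrix.mulVecLin_apply, Matrix.mulVec, dotProduct,
        Fin.sum_univ_four, cv_2_0, cv_2_1, cv_3_0, cv_3_1, cv_3_2, cv_4_0, cv_4_1, cv_4_2, cv_4_3, cv_5_0, cv_5_1, cv_5_2, cv_5_3, cv_5_4, cv_6_0, cv_6_1, cv_6_2, cv_6_3, cv_6_4, cv_6_5, cv_7_0, cv_7_1, cv_7_2, cv_7_3, cv_7_4, cv_7_5, cv_7_6, cv_8_0, cv_8_1, cv_8_2, cv_8_3, cv_8_4, cv_8_5, cv_8_6, cv_8_7, cv_9_0, cv_9_1, cv_9_2, cv_9_3, cv_9_4, cv_9_5, cv_9_6, cv_9_7, cv_9_8, fmk_2_0, fmk_2_1, fmk_3_0, fmk_3_1, fmk_3_2, fmk_4_0, fmk_4_1, fmk_4_2, fmk_4_3, fmk_5_0, fmk_5_1, fmk_5_2, fmk_5_3, fmk_5_4,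 fmk_8_0, fmk_8_1, fmk_8_2, fmk_8_3, fmk_8_4, fmk_8_5, fmk_8_6, fmk_8_7, fmk_9_0, fmk_9_1, fmk_9_2, fmk_9_3, fmk_9_4, fmk_9_5, fmk_9_6, fmk_9_7, fmk_9_8, Matrix.of_apply, Matrix.cons_val_zero, Matrix.cons_val_one, Matrix.head_cons, Pi.zero_apply] <;>
      first
        | ring1
        | linear_combination h0
        | linear_combination -h0
        | linear_combination h1
        | linear_combination -h1
        | linear_combination h2
        | linear_combination -h2
        | linear_combination h3
        | linear_combination -h3
        | linear_combination h4
        | linear_combination -h4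
  · rintro x ⟨y, rfl⟩
    have h : (Lmat a b).mulVec ((Kmat a b).mulVec y) = (Lmat a b * Kmat a b).mulVec y :=
      Matrix.mulVec_mulVec y (Lmat a b) (Kmat a b)
    simp only [LinearMap.mem_ker, Lmap, Matrix.mulVecLin_apply, h, LK_zero,
      Matrix.zero_mulVec]

lemma K_inj (a b : ℝ) : Function.Injective (Kmat a b).mulVecLin := by
  rw [← LinearMap.ker_eq_bot, LinearMap.ker_eq_bot']
  intro y hy
  have h5 := congrFun hy 5
  have h6 := congrFun hy 6
  have h7 := congrFun hy 7
  have h8 := congrFun hy 8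
  simp only [Kmat, Matrix.mulVecLin_apply, Matrix.mulVec, dotProduct,
    Fin.sum_univ_four, Pi.zero_apply, cv_2_0, cv_2_1, cv_3_0, cv_3_1, cv_3_2, cv_4_0, cv_4_1, cv_4_2, cv_4_3, cv_5_0, cv_5_1, cv_5_2, cv_5_3, cv_5_4, cv_6_0, cv_6_1, cv_6_2, cv_6_3, cv_6_4, cv_6_5, cv_7_0, cv_7_1, cv_7_2, cv_7_3, cv_7_4, cv_7_5, cv_7_6, cv_8_0, cv_8_1, cv_8_2, cv_8_3, cv_8_4, cv_8_5, cv_8_6, cv_8_7, cv_9_0, cv_9_1, cv_9_2, cv_9_3, cv_9_4, cv_9_5, cv_9_6, cv_9_7, cv_9_8, fmk_2_0, fmk_2_1, fmk_3_0, fmk_3_1, fmk_3_2, fmk_4_0, fmk_4_1, fmk_4_2, fmk_4_3, fmk_5_0, fmk_5_1, fmk_5_2, fmk_5_3, fmk_5_4, fmk_8_0, fmk_8_1, fmk_8_2, fmk_8_3, fmk_8_4, fmk_8_5, fmk_8_6, fmk_8_7, fmk_9_0, fmk_9_1, fmk_9_2, fmk_9_3, fmk_9_4, fmk_9_5, fmk_9_6,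 fmk_9_7, fmk_9_8, Matrix.of_apply, Matrix.cons_val_zero, Matrix.cons_val_one, Matrix.head_cons, Pi.zero_apply] at h5 h6 h7 h8
  funext j
  fin_cases j <;>
    simp only [Pi.zero_apply, cv_2_0, cv_2_1, cv_3_0, cv_3_1, cv_3_2, cv_4_0, cv_4_1, cv_4_2, cv_4_3, cv_5_0, cv_5_1, cv_5_2, cv_5_3, cv_5_4, cv_6_0, cv_6_1, cv_6_2, cv_6_3, cv_6_4, cv_6_5, cv_7_0, cv_7_1, cv_7_2, cv_7_3, cv_7_4, cv_7_5, cv_7_6, cv_8_0, cv_8_1, cv_8_2, cv_8_3, cv_8_4, cv_8_5, cv_8_6, cv_8_7, cv_9_0, cv_9_1, cv_9_2, cv_9_3, cv_9_4, cv_9_5, cv_9_6, cv_9_7, cv_9_8, fmk_2_0, fmk_2_1, fmk_3_0, fmk_3_1, fmk_3_2, fmk_4_0, fmk_4_1, fmk_4_2, fmk_4_3, fmk_5_0, fmk_5_1, fmk_5_2, fmk_5_3, fmk_5_4, fmk_8_0, fmk_8_1, fmk_8_2, fmk_8_3, fmk_8_4, fmk_8_5, fmk_8_6, fmk_8_7,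 fmk_9_0, fmk_9_1, fmk_9_2, fmk_9_3, fmk_9_4, fmk_9_5, fmk_9_6, fmk_9_7, fmk_9_8, Matrix.of_apply, Matrix.cons_val_zero, Matrix.cons_val_one, Matrix.head_cons, Pi.zero_apply] <;>
    first
      | linear_combination h5
      | linear_combination h6
      | linear_combination h7
      | linear_combination h8

theorem stmt5 (V : Submodule ℝ (Fin 9 → ℝ)) (hV : Module.finrank ℝ V = 6) :
    ∃ P : MvPolynomial (Fin 2) ℝ, P ≠ 0 ∧ ∀ a b : ℝ,
      MvPolynomial.eval ![a, b] P ≠ 0 →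
      4 ≤ Module.finrank ℝ (Submodule.map (Lmap a b) V) := by
  classical
  have h9 : Module.finrank ℝ (Fin 9 → ℝ) = 9 := Module.finrank_fin_fun ℝ
  have hq : Module.finrank ℝ ((Fin 9 → ℝ) ⧸ V) = 3 := by
    have h := Submodule.finrank_quotient_add_finrank V
    omega
  let e : ((Fin 9 → ℝ) ⧸ V) ≃ₗ[ℝ] (Fin 3 → ℝ) :=
    LinearEquiv.ofFinrankEq _ _ (by rw [hq, Module.finrank_fin_fun])
  obtain ⟨T, hTsurj, hTker⟩ : ∃ T : (Fin 9 → ℝ) →ₗ[ℝ] (Fin 3 → ℝ),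
      Function.Surjective T ∧ ∀ x, (x ∈ V ↔ T x = 0) := by
    refine ⟨e.toLinearMap ∘ₗ V.mkQ, e.surjective.comp (Submodule.mkQ_surjective V), fun x => ?_⟩
    rw [LinearMap.comp_apply]
    constructor
    · intro hxV
      rw [show V.mkQ x = 0 by rwa [Submodule.mkQ_apply, Submodule.Quotient.mk_eq_zero], map_zero]
    · intro h
      have h0 : e (V.mkQ x) = e 0 := by rw [map_zero]; exact h
      have := e.injective h0
      rwa [Submodule.mkQ_apply, Submodule.Quotient.mk_eq_zero] at this
  set W : Matrix (Fin 3) (Fin 9) ℝ := LinearMap.toMatrix' T with hWdef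
  have hWT : ∀ x, W.mulVec x = T x := fun x => by
    rw [hWdef, ← Matrix.toLin'_apply, Matrix.toLin'_toMatrix']
  have hVmem : ∀ x, x ∈ V ↔ W.mulVec x = 0 := fun x => by rw [hTker, hWT]
  -- core: some 2x2 polynomial minor is nonzero
  obtain ⟨i, j, k, l, hij, hkl, hP⟩ :
      ∃ (i j : Fin 3) (k l : Fin 4), i ≠ j ∧ k ≠ l ∧
        entP k (W i) * entP l (W j) - entP l (W i) * entP k (W j) ≠ 0 := by
    by_contra hC
    push_neg at hC
    have Hm : ∀ (k l : Fin 4) (a b : ℝ),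
        MvPolynomial.eval ![a, b] (entP k (W 0)) * MvPolynomial.eval ![a, b] (entP l (W 1))
          = MvPolynomial.eval ![a, b] (entP l (W 0)) * MvPolynomial.eval ![a, b] (entP k (W 1)) := by
      intro k l a b
      rcases eq_or_ne k l with rfl | hkl
      · ring
      · have h0 := hC 0 1 k l (by decide) hkl
        have h1 := congrArg (MvPolynomial.eval ![a, b]) h0
        simp only [map_sub, _root_.map_mul, map_zero] at h1
        linear_combination h1
    have pr : ∀ m n : Fin 9, W 0 m * W 1 n = W 0 n * W 1 m := by
      refine pair_rel (W 0) (W 1) ?_ ?_ ?_ ?_ ?_ ?_ <;> intro a b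
      · have h := Hm 0 1 a b
        simp only [eval_entP0, eval_entP1, eval_entP2, eval_entP3] at h
        linear_combination h
      · have h := Hm 0 2 a b
        simp only [eval_entP0, eval_entP1, eval_entP2, eval_entP3] at h
        linear_combination h
      · have h := Hm 0 3 a b
        simp only [eval_entP0, eval_entP1, eval_entP2, eval_entP3] at h
        linear_combination h
      · have h := Hm 1 2 a b
        simp only [eval_entP0, eval_entP1, eval_entP2, eval_entP3] at h
        linear_combination h
      · have h := Hm 1 3 a b
        simp only [eval_entP0, eval_entP1, eval_entP2, eval_entP3] at h
        linear_combination h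
      · have h := Hm 2 3 a b
        simp only [eval_entP0, eval_entP1, eval_entP2, eval_entP3] at h
        linear_combination h
    obtain ⟨x0, hx0⟩ := hTsurj ![1, 0, 0]
    obtain ⟨x1, hx1⟩ := hTsurj ![0, 1, 0]
    have e00 : ∑ n, W 0 n * x0 n = 1 := by
      have h := congrFun (hWT x0) 0
      rw [hx0] at h
      simpa [Matrix.mulVec, dotProduct] using h
    have e01 : ∑ n, W 1 n * x0 n = 0 := by
      have h := congrFun (hWT x0) 1
      rw [hx0] at h
      simpa [Matrix.mulVec, dotProduct] using h
    have e11 : ∑ n, W 1 n * x1 n = 1 := by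
      have h := congrFun (hWT x1) 1
      rw [hx1] at h
      simpa [Matrix.mulVec, dotProduct] using h
    have hW1 : ∀ m, W 1 m = 0 := by
      intro m
      have hcalc : W 1 m = W 0 m * ∑ n, W 1 n * x0 n := by
        calc W 1 m = W 1 m * ∑ n, W 0 n * x0 n := by rw [e00, mul_one]
        _ = ∑ n, W 1 m * (W 0 n * x0 n) := Finset.mul_sum _ _ _
        _ = ∑ n, W 0 m * (W 1 n * x0 n) :=
            Finset.sum_congr rfl (fun n _ => by linear_combination (-(x0 n)) * pr m n)
        _ = W 0 m * ∑ n, W 1 n * x0 n := (Finset.mul_sum _ _ _).symm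
      rw [e01, mul_zero] at hcalc
      exact hcalc
    have : (1 : ℝ) = 0 := by
      rw [← e11]
      exact Finset.sum_eq_zero (fun n _ => by rw [hW1 n, zero_mul])
    exact one_ne_zero this
  refine ⟨entP k (W i) * entP l (W j) - entP l (W i) * entP k (W j), hP, ?_⟩
  intro a b hPab
  set N : Matrix (Fin 3) (Fin 4) ℝ := W * Kmat a b with hNdef
  have hminor : N i k * N j l - N i l * N j k ≠ 0 := by
    have h := hPab
    simp only [map_sub, _root_.map_mul] at h
    simpa only [hNdef, N_entry] using h
  -- the two columns k, l of N are linearly independent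
  have hcol : LinearIndependent ℝ ![Nᵀ k, Nᵀ l] := by
    rw [linearIndependent_fin2]
    constructor
    · simp only [Matrix.cons_val_one, Matrix.head_cons]
      intro h0
      apply hminor
      have h1 : N i l = 0 := by rw [← Matrix.transpose_apply N, show Nᵀ l = 0 from h0]; rfl
      have h2 : N j l = 0 := by rw [← Matrix.transpose_apply N, show Nᵀ l = 0 from h0]; rfl
      rw [h1, h2]; ring
    · intro s
      simp only [Matrix.cons_val_one, Matrix.head_cons, Matrix.cons_val_zero]
      intro h0
      apply hminor
      have h1 := congrFun h0 i
      have h2 := congrFun h0 j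
      simp only [Pi.smul_apply, Matrix.transpose_apply, smul_eq_mul] at h1 h2
      rw [← h1, ← h2]; ring
  have hrank : 2 ≤ Module.finrank ℝ (LinearMap.range N.mulVecLin) := by
    have hsp : Submodule.span ℝ (Set.range ![Nᵀ k, Nᵀ l]) ≤ LinearMap.range N.mulVecLin := by
      rw [Submodule.span_le]
      rintro x ⟨t, rfl⟩
      fin_cases t
      · exact ⟨Pi.single k 1, by rw [Matrix.mulVecLin_apply, Matrix.mulVec_single_one]; rfl⟩
      · exact ⟨Pi.single l 1, by rw [Matrix.mulVecLin_apply, Matrix.mulVec_single_one]; rfl⟩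
    have h2 := finrank_span_eq_card hcol
    simp only [Fintype.card_fin] at h2
    have h3 := Submodule.finrank_mono hsp
    omega
  have hker : Module.finrank ℝ (LinearMap.ker N.mulVecLin) ≤ 2 := by
    have h := LinearMap.finrank_range_add_finrank_ker N.mulVecLin
    rw [Module.finrank_fin_fun] at h
    omega
  have hinter : V ⊓ LinearMap.ker (Lmap a b)
      = Submodule.map (Kmat a b).mulVecLin (LinearMap.ker N.mulVecLin) := by
    ext x
    simp only [Submodule.mem_inf, Submodule.mem_map, LinearMap.mem_ker, ker_Lmap a b,
      LinearMap.mem_range]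
    constructor
    · rintro ⟨hxV, y, rfl⟩
      refine ⟨y, ?_, rfl⟩
      have hw := (hVmem _).mp hxV
      show N.mulVecLin y = 0
      rw [hNdef]
      simp only [Matrix.mulVecLin_apply] at hw ⊢
      rw [← Matrix.mulVec_mulVec]
      exact hw
    · rintro ⟨y, hy, rfl⟩
      constructor
      · rw [hVmem]
        have : N.mulVecLin y = 0 := hy
        rw [hNdef] at this
        simp only [Matrix.mulVecLin_apply] at this ⊢
        rw [Matrix.mulVec_mulVec]
        exact this
      · exact ⟨y, rfl⟩
  have hfr2 : Module.finrank ℝ ↥(V ⊓ LinearMap.ker (Lmap a b)) ≤ 2 := by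
    rw [hinter]
    rw [← LinearEquiv.finrank_eq
      (Submodule.equivMapOfInjective (Kmat a b).mulVecLin (K_inj a b) (LinearMap.ker N.mulVecLin))]
    exact hker
  have hsum : Module.finrank ℝ (Submodule.map (Lmap a b) V)
      + Module.finrank ℝ ↥(V ⊓ LinearMap.ker (Lmap a b)) = 6 := by
    have h := LinearMap.finrank_range_add_finrank_ker ((Lmap a b) ∘ₗ V.subtype)
    rw [LinearMap.range_comp, Submodule.range_subtype, LinearMap.ker_comp] at h
    rw [hV] at h
    have hks : Module.finrank ℝ ↥(Submodule.comap V.subtype (LinearMap.ker (Lmap a b)))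
        = Module.finrank ℝ ↥(V ⊓ LinearMap.ker (Lmap a b)) := by
      rw [← Submodule.map_comap_subtype]
      exact (Submodule.finrank_map_subtype_eq V _).symm
    rw [hks] at h
    exact h
  omega
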